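/- Under hyper-generalized recurrence with recurrence 1-forms A and B, the relation (A + (n−2)B)(Ric₀ Z) = (r/2)·(A(Z) + 2(n−2)·B(Z)) holds for all Z ∈ V. (Theorem 2.2(c).) -/

import Mathlib

open scoped BigOperators

/-- Kulkarni–Nomizu product of two bilinear forms (as real-valued functions). -/
def KN {V : Type*} (h k : V → V → ℝ) (X Y Z W : V) : ℝ :=
  h X Z * k Y W + h Y W * k X Z - h X W * k Y Z - h Y Z * k X W

/-- The tensor `G(X,Y,Z,W) = g(X,Z)g(Y,W) - g(Y,Z)g(X,W)`. -/
def Gten {V : Type*} (g : V → V → ℝ) (X Y Z W : V) : ℝ :=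
  g X Z * g Y W - g Y Z * g X W

/-- Derivation action of the curvature endomorphism `Rend U V` on a quadrilinear form `T`. -/
def derAct {V : Type*} (Rend : V → V → V → V) (T : V → V → V → V → ℝ)
    (U V' X Y Z W : V) : ℝ :=
  - T (Rend U V' X) Y Z W - T X (Rend U V' Y) Z W
    - T X Y (Rend U V' Z) W - T X Y Z (Rend U V' W)

theorem hgr_ricci_operator_relation {V : Type*} [AddCommGroup V] [Module ℝ V]
    (n : ℕ) (hn : 3 ≤ n)
    (b : Module.Basis (Fin n) ℝ V) (e' : Fin n → V)
    (g : V →ₗ[ℝ] V →ₗ[ℝ] ℝ)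
    (hg_symm : ∀ X Y, g X Y = g Y X)
    (hg_nd : ∀ X, (∀ Y, g X Y = 0) → X = 0)
    (hdual : ∀ i j, g (b i) (e' j) = if i = j then (1 : ℝ) else 0)
    (R : V →ₗ[ℝ] V →ₗ[ℝ] V →ₗ[ℝ] V →ₗ[ℝ] ℝ)
    (hR_ne : R ≠ 0)
    (hR_anti : ∀ X Y Z W, R X Y Z W = - R Y X Z W)
    (hR_pair : ∀ X Y Z W, R X Y Z W = R Z W X Y)
    (Ric : V → V → ℝ)
    (hRic : ∀ X Z, Ric X Z = ∑ i, R X (b i) Z (e' i))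
    (r : ℝ) (hr : r = ∑ i, Ric (b i) (e' i))
    (Ric₀ : V →ₗ[ℝ] V)
    (hRic₀ : ∀ X Y, g (Ric₀ X) Y = Ric X Y)
    (D : V →ₗ[ℝ] V →ₗ[ℝ] V →ₗ[ℝ] V →ₗ[ℝ] V →ₗ[ℝ] ℝ)
    (hBianchi : ∀ X Y Z W U, D X Y Z W U + D Y Z X W U + D Z X Y W U = 0)
    (A B : V →ₗ[ℝ] ℝ) (hA : A ≠ 0) (hB : B ≠ 0)
    (hHGR : ∀ U X Y Z W,
      D U X Y Z W = A U * R X Y Z W + B U * KN (fun a c => g a c) Ric X Y Z W)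
    (DRic : V → V → V → ℝ)
    (hDRicDef : ∀ U X Z, DRic U X Z = ∑ i, D U X (b i) Z (e' i))
    :
    ∀ Z, A (Ric₀ Z) + ((n : ℝ) - 2) * B (Ric₀ Z)
      = r / 2 * (A Z + 2 * ((n : ℝ) - 2) * B Z) := by
  classical
  intro Z
  -- expansion of a vector in the basis `b` with coefficients given by `g · (e' i)`
  have hrepr : ∀ (X : V) (i : Fin n), g X (e' i) = b.repr X i := by
    intro X i
    conv_lhs => rw [← b.sum_repr X]
    simp only [map_sum, map_smul, LinearMap.sum_apply, LinearMap.smul_apply, smul_eq_mul, hdual]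
    simp
  have hexp : ∀ X : V, X = ∑ i, g X (e' i) • b i := by
    intro X
    conv_lhs => rw [← b.sum_repr X]
    exact Finset.sum_congr rfl fun i _ => by rw [hrepr]
  -- linearity of g in each slot over sums of the given form
  have hg2 : ∀ (X : V) (c : Fin n → ℝ) (v : Fin n → V),
      g X (∑ j, c j • v j) = ∑ j, c j * g X (v j) := by
    intro X c v
    simp [map_sum, map_smul, smul_eq_mul]
  have hg1 : ∀ (c : Fin n → ℝ) (v : Fin n → V) (y : V),
      g (∑ j, c j • v j) y = ∑ j, c j * g (v j) y := by
    intro c v y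
    simp [map_sum, map_smul, LinearMap.sum_apply, LinearMap.smul_apply, smul_eq_mul]
  -- linearity of Ric in each slot
  have hRlin : ∀ (X Y W : V) (c : Fin n → ℝ) (v : Fin n → V),
      R X Y (∑ j, c j • v j) W = ∑ j, c j * R X Y (v j) W := by
    intro X Y W c v
    simp [map_sum, map_smul, LinearMap.sum_apply, LinearMap.smul_apply, smul_eq_mul]
  have hRic2 : ∀ (X : V) (c : Fin n → ℝ) (v : Fin n → V),
      Ric X (∑ j, c j • v j) = ∑ j, c j * Ric X (v j) := by
    intro X c v
    simp only [hRic]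
    have h1 : ∀ i : Fin n, R X (b i) (∑ j, c j • v j) (e' i)
        = ∑ j, c j * R X (b i) (v j) (e' i) := fun i => hRlin _ _ _ _ _
    rw [Finset.sum_congr rfl fun i _ => h1 i, Finset.sum_comm]
    exact Finset.sum_congr rfl fun j _ => (Finset.mul_sum _ _ _).symm
  have hRic1 : ∀ (W : V) (c : Fin n → ℝ) (v : Fin n → V),
      Ric (∑ j, c j • v j) W = ∑ j, c j * Ric (v j) W := by
    intro W c v
    simp only [hRic]
    have h1 : ∀ i : Fin n, R (∑ j, c j • v j) (b i) W (e' i)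
        = ∑ j, c j * R (v j) (b i) W (e' i) := by
      intro i
      simp [map_sum, map_smul, LinearMap.sum_apply, LinearMap.smul_apply, smul_eq_mul]
    rw [Finset.sum_congr rfl fun i _ => h1 i, Finset.sum_comm]
    exact Finset.sum_congr rfl fun j _ => (Finset.mul_sum _ _ _).symm
  -- swap lemma for contractions
  have hswap : ∀ f : V → V → ℝ,
      (∀ (c : Fin n → ℝ) (y : V), f (∑ j, c j • b j) y = ∑ j, c j * f (b j) y) →
      (∀ (x : V) (c : Fin n → ℝ), f x (∑ j, c j • b j) = ∑ j, c j * f x (b j)) →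
      ∑ i, f (b i) (e' i) = ∑ i, f (e' i) (b i) := by
    intro f hf1 hf2
    have l1 : ∀ i, f (b i) (e' i) = ∑ j, g (e' i) (e' j) * f (b i) (b j) := by
      intro i
      conv_lhs => rw [hexp (e' i)]
      exact hf2 _ _
    have l2 : ∀ i, f (e' i) (b i) = ∑ j, g (e' i) (e' j) * f (b j) (b i) := by
      intro i
      conv_lhs => rw [hexp (e' i)]
      exact hf1 _ _
    rw [Finset.sum_congr rfl fun i _ => l1 i, Finset.sum_congr rfl fun i _ => l2 i,
      Finset.sum_comm]
    refine Finset.sum_congr rfl fun i _ => Finset.sum_congr rfl fun j _ => ?_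
    rw [hg_symm (e' j) (e' i)]
  -- antisymmetry in the second pair
  have hR_anti2 : ∀ X Y Z' W, R X Y Z' W = - R X Y W Z' := by
    intro X Y Z' W
    calc R X Y Z' W = R Z' W X Y := hR_pair _ _ _ _
      _ = - R W Z' X Y := hR_anti _ _ _ _
      _ = - R X Y W Z' := by rw [hR_pair W Z' X Y]
  -- symmetry of Ric
  have hRicS : ∀ X Y, Ric X Y = Ric Y X := by
    intro X Y
    calc Ric X Y = ∑ i, R Y (e' i) X (b i) := by
          rw [hRic]
          exact Finset.sum_congr rfl fun i _ => hR_pair _ _ _ _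
      _ = ∑ i, R Y (b i) X (e' i) := by
          refine (hswap (fun p q => R Y p X q) ?_ ?_).symm
          · intro c y
            simp [map_sum, map_smul, LinearMap.sum_apply, LinearMap.smul_apply, smul_eq_mul]
          · intro x c
            simp [map_sum, map_smul, LinearMap.sum_apply, LinearMap.smul_apply, smul_eq_mul]
      _ = Ric Y X := (hRic Y X).symm
  -- expansion contraction lemmas
  have E1a : ∀ (X W : V), ∑ i, g X (e' i) * Ric (b i) W = Ric X W := by
    intro X W
    refine (hRic1 W (fun i => g X (e' i)) b).symm.trans ?_
    rw [← hexp X]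
  have E2b : ∀ (X W : V), ∑ i, g (b i) X * Ric W (e' i) = Ric W X := by
    intro X W
    have h1 : ∑ i, g (b i) X * Ric W (e' i) = ∑ i, g X (b i) * Ric W (e' i) :=
      Finset.sum_congr rfl fun i _ => by rw [hg_symm]
    have h2 : ∑ i, g X (b i) * Ric W (e' i) = ∑ i, g X (e' i) * Ric W (b i) := by
      refine hswap (fun p q => g X p * Ric W q) ?_ ?_
      · intro c y
        rw [hg2, Finset.sum_mul]
        exact Finset.sum_congr rfl fun j _ => (mul_assoc _ _ _)
      · intro x c
        rw [hRic2, Finset.mul_sum]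
        exact Finset.sum_congr rfl fun j _ => by ring
    have h3 : ∑ i, g X (e' i) * Ric W (b i) = Ric W X := by
      refine (hRic2 W (fun i => g X (e' i)) b).symm.trans ?_
      rw [← hexp X]
    exact h1.trans (h2.trans h3)
  -- metric duals of A and B
  have hfun : ∀ (L : V →ₗ[ℝ] ℝ) (X : V), g X (∑ i, L (b i) • e' i) = L X := by
    intro L X
    rw [hg2]
    conv_rhs => rw [hexp X]
    rw [map_sum]
    simp [map_smul, smul_eq_mul, mul_comm]
  have hRdualA : ∀ X : V, Ric X (∑ i, A (b i) • e' i) = A (Ric₀ X) := by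
    intro X
    rw [← hRic₀]
    exact hfun A (Ric₀ X)
  have hRdualB : ∀ X : V, Ric X (∑ i, B (b i) • e' i) = B (Ric₀ X) := by
    intro X
    rw [← hRic₀]
    exact hfun B (Ric₀ X)
  have hsumRic : ∀ (L : V →ₗ[ℝ] ℝ) (X : V),
      ∑ i, L (b i) * Ric X (e' i) = Ric X (∑ i, L (b i) • e' i) :=
    fun L X => (hRic2 X (fun i => L (b i)) e').symm
  have hsumg : ∀ (L : V →ₗ[ℝ] ℝ) (X : V), ∑ i, L (b i) * g X (e' i) = L X := by
    intro L X
    rw [← hg2 X (fun i => L (b i)) e']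
    exact hfun L X
  -- the inner contraction for the D1-term
  have hinner1 : ∀ u : V, ∑ j, R (b j) Z (e' j) u = Ric u Z := by
    intro u
    have s3 : ∑ j, R (b j) Z (e' j) u = ∑ j, - R (b j) Z u (e' j) :=
      Finset.sum_congr rfl fun j _ => hR_anti2 _ _ _ _
    have s4 : ∑ j, R (b j) Z u (e' j) = ∑ j, R (e' j) Z u (b j) := by
      refine hswap (fun p q => R p Z u q) ?_ ?_
      · intro c y
        simp [map_sum, map_smul, LinearMap.sum_apply, LinearMap.smul_apply, smul_eq_mul]
      · intro x c
        simp [map_sum, map_smul, LinearMap.sum_apply, LinearMap.smul_apply, smul_eq_mul]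
    have s5 : ∀ j, R (e' j) Z u (b j) = - R u (b j) Z (e' j) := by
      intro j
      calc R (e' j) Z u (b j) = R u (b j) (e' j) Z := hR_pair _ _ _ _
        _ = - R u (b j) Z (e' j) := hR_anti2 _ _ _ _
    calc ∑ j, R (b j) Z (e' j) u = ∑ j, - R (b j) Z u (e' j) := s3
      _ = - ∑ j, R (b j) Z u (e' j) := by rw [Finset.sum_neg_distrib]
      _ = - ∑ j, R (e' j) Z u (b j) := by rw [s4]
      _ = - ∑ j, - R u (b j) Z (e' j) := by
          rw [Finset.sum_congr rfl fun j _ => s5 j]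
      _ = ∑ j, R u (b j) Z (e' j) := by rw [Finset.sum_neg_distrib, neg_neg]
      _ = Ric u Z := (hRic u Z).symm
  have hKN : ∀ X Y Z' W : V, KN (fun a c => g a c) Ric X Y Z' W
      = g X Z' * Ric Y W + g Y W * Ric X Z' - g X W * Ric Y Z' - g Y Z' * Ric X W :=
    fun _ _ _ _ => rfl
  -- the six double sums
  have hD1 : ∑ i, ∑ j, A (b i) * R (b j) Z (e' j) (e' i) = A (Ric₀ Z) := by
    have h1 : ∀ i : Fin n, ∑ j, A (b i) * R (b j) Z (e' j) (e' i)
        = A (b i) * Ric Z (e' i) := by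
      intro i
      rw [← Finset.mul_sum, hinner1 (e' i), hRicS]
    rw [Finset.sum_congr rfl fun i _ => h1 i, hsumRic A Z, hRdualA]
  have hD3 : ∑ i, ∑ j, A (b j) * R Z (b i) (e' j) (e' i) = A (Ric₀ Z) := by
    rw [Finset.sum_comm]
    have h1 : ∀ j : Fin n, ∑ i, A (b j) * R Z (b i) (e' j) (e' i)
        = A (b j) * Ric Z (e' j) := by
      intro j
      rw [← Finset.mul_sum, ← hRic]
    rw [Finset.sum_congr rfl fun j _ => h1 j, hsumRic A Z, hRdualA]
  have hD5 : ∑ i, ∑ j, A Z * R (b i) (b j) (e' j) (e' i) = A Z * (-r) := by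
    have h1 : ∀ i : Fin n, ∑ j, A Z * R (b i) (b j) (e' j) (e' i)
        = A Z * (- Ric (b i) (e' i)) := by
      intro i
      rw [← Finset.mul_sum]
      congr 1
      have h2 : ∀ j : Fin n, R (b i) (b j) (e' j) (e' i)
          = - R (b i) (b j) (e' i) (e' j) := fun j => hR_anti2 _ _ _ _
      rw [Finset.sum_congr rfl fun j _ => h2 j, Finset.sum_neg_distrib, ← hRic]
    rw [Finset.sum_congr rfl fun i _ => h1 i, ← Finset.mul_sum, Finset.sum_neg_distrib, ← hr]
  have hD2 : ∑ i, ∑ j, B (b i) * KN (fun a c => g a c) Ric (b j) Z (e' j) (e' i)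
      = ((n : ℝ) - 2) * B (Ric₀ Z) + r * B Z := by
    have hin : ∀ i : Fin n, ∑ j, KN (fun a c => g a c) Ric (b j) Z (e' j) (e' i)
        = ((n : ℝ) - 2) * Ric Z (e' i) + r * g Z (e' i) := by
      intro i
      have e1 : ∑ j, g (b j) (e' j) * Ric Z (e' i) = (n : ℝ) * Ric Z (e' i) := by
        have h2 : ∀ j : Fin n, g (b j) (e' j) * Ric Z (e' i) = Ric Z (e' i) := by
          intro j; rw [hdual]; simp
        rw [Finset.sum_congr rfl fun j _ => h2 j, Finset.sum_const, Finset.card_univ]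
        simp [nsmul_eq_mul]
      have e2 : ∑ j, g Z (e' i) * Ric (b j) (e' j) = g Z (e' i) * r := by
        rw [← Finset.mul_sum, ← hr]
      have e3 : ∑ j, g (b j) (e' i) * Ric Z (e' j) = Ric Z (e' i) := E2b (e' i) Z
      have e4 : ∑ j, g Z (e' j) * Ric (b j) (e' i) = Ric Z (e' i) := E1a Z (e' i)
      calc ∑ j, KN (fun a c => g a c) Ric (b j) Z (e' j) (e' i)
          = ∑ j, (g (b j) (e' j) * Ric Z (e' i) + g Z (e' i) * Ric (b j) (e' j)
              - g (b j) (e' i) * Ric Z (e' j) - g Z (e' j) * Ric (b j) (e' i)) :=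
            Finset.sum_congr rfl fun j _ => hKN _ _ _ _
        _ = (∑ j, g (b j) (e' j) * Ric Z (e' i)) + (∑ j, g Z (e' i) * Ric (b j) (e' j))
              - (∑ j, g (b j) (e' i) * Ric Z (e' j)) - (∑ j, g Z (e' j) * Ric (b j) (e' i)) := by
            rw [Finset.sum_sub_distrib, Finset.sum_sub_distrib, Finset.sum_add_distrib]
        _ = ((n : ℝ) - 2) * Ric Z (e' i) + r * g Z (e' i) := by
            rw [e1, e2, e3, e4]; ring
    calc ∑ i, ∑ j, B (b i) * KN (fun a c => g a c) Ric (b j) Z (e' j) (e' i)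
        = ∑ i, B (b i) * (((n : ℝ) - 2) * Ric Z (e' i) + r * g Z (e' i)) := by
          refine Finset.sum_congr rfl fun i _ => ?_
          rw [← Finset.mul_sum, hin i]
      _ = ((n : ℝ) - 2) * (∑ i, B (b i) * Ric Z (e' i)) + r * (∑ i, B (b i) * g Z (e' i)) := by
          rw [Finset.mul_sum, Finset.mul_sum, ← Finset.sum_add_distrib]
          exact Finset.sum_congr rfl fun i _ => by ring
      _ = ((n : ℝ) - 2) * B (Ric₀ Z) + r * B Z := by
          rw [hsumRic B Z, hRdualB, hsumg B Z]
  have hD4 : ∑ i, ∑ j, B (b j) * KN (fun a c => g a c) Ric Z (b i) (e' j) (e' i)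
      = r * B Z + ((n : ℝ) - 2) * B (Ric₀ Z) := by
    rw [Finset.sum_comm]
    have hin : ∀ j : Fin n, ∑ i, KN (fun a c => g a c) Ric Z (b i) (e' j) (e' i)
        = r * g Z (e' j) + ((n : ℝ) - 2) * Ric Z (e' j) := by
      intro j
      have e1 : ∑ i, g Z (e' j) * Ric (b i) (e' i) = g Z (e' j) * r := by
        rw [← Finset.mul_sum, ← hr]
      have e2 : ∑ i, g (b i) (e' i) * Ric Z (e' j) = (n : ℝ) * Ric Z (e' j) := by
        have h2 : ∀ i : Fin n, g (b i) (e' i) * Ric Z (e' j) = Ric Z (e' j) := by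
          intro i; rw [hdual]; simp
        rw [Finset.sum_congr rfl fun i _ => h2 i, Finset.sum_const, Finset.card_univ]
        simp [nsmul_eq_mul]
      have e3 : ∑ i, g Z (e' i) * Ric (b i) (e' j) = Ric Z (e' j) := E1a Z (e' j)
      have e4 : ∑ i, g (b i) (e' j) * Ric Z (e' i) = Ric Z (e' j) := E2b (e' j) Z
      calc ∑ i, KN (fun a c => g a c) Ric Z (b i) (e' j) (e' i)
          = ∑ i, (g Z (e' j) * Ric (b i) (e' i) + g (b i) (e' i) * Ric Z (e' j)
              - g Z (e' i) * Ric (b i) (e' j) - g (b i) (e' j) * Ric Z (e' i)) :=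
            Finset.sum_congr rfl fun i _ => hKN _ _ _ _
        _ = (∑ i, g Z (e' j) * Ric (b i) (e' i)) + (∑ i, g (b i) (e' i) * Ric Z (e' j))
              - (∑ i, g Z (e' i) * Ric (b i) (e' j)) - (∑ i, g (b i) (e' j) * Ric Z (e' i)) := by
            rw [Finset.sum_sub_distrib, Finset.sum_sub_distrib, Finset.sum_add_distrib]
        _ = r * g Z (e' j) + ((n : ℝ) - 2) * Ric Z (e' j) := by
            rw [e1, e2, e3, e4]; ring
    calc ∑ j, ∑ i, B (b j) * KN (fun a c => g a c) Ric Z (b i) (e' j) (e' i)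
        = ∑ j, B (b j) * (r * g Z (e' j) + ((n : ℝ) - 2) * Ric Z (e' j)) := by
          refine Finset.sum_congr rfl fun j _ => ?_
          rw [← Finset.mul_sum, hin j]
      _ = r * (∑ j, B (b j) * g Z (e' j)) + ((n : ℝ) - 2) * (∑ j, B (b j) * Ric Z (e' j)) := by
          rw [Finset.mul_sum, Finset.mul_sum, ← Finset.sum_add_distrib]
          exact Finset.sum_congr rfl fun j _ => by ring
      _ = r * B Z + ((n : ℝ) - 2) * B (Ric₀ Z) := by
          rw [hsumRic B Z, hRdualB, hsumg B Z]
  have hD6 : ∑ i, ∑ j, B Z * KN (fun a c => g a c) Ric (b i) (b j) (e' j) (e' i)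
      = B Z * ((2 - 2 * (n : ℝ)) * r) := by
    have hin : ∀ i : Fin n, ∑ j, KN (fun a c => g a c) Ric (b i) (b j) (e' j) (e' i)
        = 2 * Ric (b i) (e' i) - r - (n : ℝ) * Ric (b i) (e' i) := by
      intro i
      have u1 : ∑ j, g (b i) (e' j) * Ric (b j) (e' i) = Ric (b i) (e' i) := E1a (b i) (e' i)
      have u2 : ∑ j, g (b j) (e' i) * Ric (b i) (e' j) = Ric (b i) (e' i) := E2b (e' i) (b i)
      have u3 : ∑ j, g (b i) (e' i) * Ric (b j) (e' j) = r := by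
        rw [← Finset.mul_sum, ← hr, hdual]; simp
      have u4 : ∑ j, g (b j) (e' j) * Ric (b i) (e' i) = (n : ℝ) * Ric (b i) (e' i) := by
        have h2 : ∀ j : Fin n, g (b j) (e' j) * Ric (b i) (e' i) = Ric (b i) (e' i) := by
          intro j; rw [hdual]; simp
        rw [Finset.sum_congr rfl fun j _ => h2 j, Finset.sum_const, Finset.card_univ]
        simp [nsmul_eq_mul]
      calc ∑ j, KN (fun a c => g a c) Ric (b i) (b j) (e' j) (e' i)
          = ∑ j, (g (b i) (e' j) * Ric (b j) (e' i) + g (b j) (e' i) * Ric (b i) (e' j)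
              - g (b i) (e' i) * Ric (b j) (e' j) - g (b j) (e' j) * Ric (b i) (e' i)) :=
            Finset.sum_congr rfl fun j _ => hKN _ _ _ _
        _ = (∑ j, g (b i) (e' j) * Ric (b j) (e' i)) + (∑ j, g (b j) (e' i) * Ric (b i) (e' j))
              - (∑ j, g (b i) (e' i) * Ric (b j) (e' j)) - (∑ j, g (b j) (e' j) * Ric (b i) (e' i)) := by
            rw [Finset.sum_sub_distrib, Finset.sum_sub_distrib, Finset.sum_add_distrib]
        _ = 2 * Ric (b i) (e' i) - r - (n : ℝ) * Ric (b i) (e' i) := by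
            rw [u1, u2, u3, u4]; ring
    calc ∑ i, ∑ j, B Z * KN (fun a c => g a c) Ric (b i) (b j) (e' j) (e' i)
        = ∑ i, B Z * (2 * Ric (b i) (e' i) - r - (n : ℝ) * Ric (b i) (e' i)) := by
          refine Finset.sum_congr rfl fun i _ => ?_
          rw [← Finset.mul_sum, hin i]
      _ = B Z * ∑ i, (2 * Ric (b i) (e' i) - r - (n : ℝ) * Ric (b i) (e' i)) := by
          rw [Finset.mul_sum]
      _ = B Z * ((2 - 2 * (n : ℝ)) * r) := by
          congr 1
          rw [Finset.sum_sub_distrib, Finset.sum_sub_distrib, ← Finset.mul_sum, ← Finset.mul_sum,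
            ← hr, Finset.sum_const, Finset.card_univ]
          simp [nsmul_eq_mul]
          ring
  -- the doubly contracted second Bianchi identity
  have hzero : ∑ i, ∑ j,
      ((A (b i) * R (b j) Z (e' j) (e' i)
          + B (b i) * KN (fun a c => g a c) Ric (b j) Z (e' j) (e' i))
        + (A (b j) * R Z (b i) (e' j) (e' i)
          + B (b j) * KN (fun a c => g a c) Ric Z (b i) (e' j) (e' i))
        + (A Z * R (b i) (b j) (e' j) (e' i)
          + B Z * KN (fun a c => g a c) Ric (b i) (b j) (e' j) (e' i))) = 0 := by
    refine Finset.sum_eq_zero fun i _ => Finset.sum_eq_zero fun j _ => ?_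
    have h := hBianchi (b i) (b j) Z (e' j) (e' i)
    simp only [hHGR] at h
    exact h
  have hsum : ∑ i, ∑ j,
      ((A (b i) * R (b j) Z (e' j) (e' i)
          + B (b i) * KN (fun a c => g a c) Ric (b j) Z (e' j) (e' i))
        + (A (b j) * R Z (b i) (e' j) (e' i)
          + B (b j) * KN (fun a c => g a c) Ric Z (b i) (e' j) (e' i))
        + (A Z * R (b i) (b j) (e' j) (e' i)
          + B Z * KN (fun a c => g a c) Ric (b i) (b j) (e' j) (e' i)))
      = ((∑ i, ∑ j, A (b i) * R (b j) Z (e' j) (e' i))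
          + (∑ i, ∑ j, B (b i) * KN (fun a c => g a c) Ric (b j) Z (e' j) (e' i)))
        + ((∑ i, ∑ j, A (b j) * R Z (b i) (e' j) (e' i))
          + (∑ i, ∑ j, B (b j) * KN (fun a c => g a c) Ric Z (b i) (e' j) (e' i)))
        + ((∑ i, ∑ j, A Z * R (b i) (b j) (e' j) (e' i))
          + (∑ i, ∑ j, B Z * KN (fun a c => g a c) Ric (b i) (b j) (e' j) (e' i))) := by
    simp only [Finset.sum_add_distrib]
  rw [hsum, hD1, hD2, hD3, hD4, hD5, hD6] at hzero
  linear_combination hzero / 2
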